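/- Let S and I be independent nonnegative random variables and N₀ > 0. Then E[ln(1 + S/(I + N₀))] = ∫₀^∞ L_I(z/N₀) (1 − L_S(z/N₀)) e^{−z}/z dz, where L_S and L_I are the Laplace transforms of S and I. -/

import Mathlib

open MeasureTheory ProbabilityTheory Real Set

/-- Integral of a decaying exponential on `(0, ∞)`. -/
lemma integral_exp_neg_mul_Ioi' {b : ℝ} (hb : 0 < b) :
    ∫ z in Set.Ioi (0:ℝ), Real.exp (-(b * z)) = 1 / b := by
  have h := Real.integral_rpow_mul_exp_neg_mul_Ioi (a := 1) (r := b) one_pos hb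
  rw [Real.Gamma_one, mul_one, rpow_one] at h
  rw [← h]
  refine setIntegral_congr_fun measurableSet_Ioi fun t ht => ?_
  rw [show (1:ℝ) - 1 = 0 by norm_num, rpow_zero, one_mul]

/-- Inner integral for the Frullani computation. -/
lemma integral_exp_Ioc' {z a b : ℝ} (hz : 0 < z) (hab : a ≤ b) :
    ∫ s in Set.Ioc a b, Real.exp (-(z * s)) =
      (Real.exp (-(z * a)) - Real.exp (-(z * b))) / z := by
  rw [← intervalIntegral.integral_of_le hab]
  have hderiv : ∀ s ∈ Set.uIcc a b,
      HasDerivAt (fun s => -(Real.exp (-(z * s)) / z)) (Real.exp (-(z * s))) s := by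
    intro s _
    have h1 : HasDerivAt (fun s : ℝ => -(z * s)) (-z) s := by
      simpa [neg_mul] using (hasDerivAt_id s).const_mul (-z)
    have h3 := ((h1.exp).div_const z).neg
    convert h3 using 1
    · rfl
    · rfl
    · rfl
    · field_simp
  rw [intervalIntegral.integral_eq_sub_of_hasDerivAt hderiv
    ((Real.continuous_exp.comp (continuous_const.mul continuous_id).neg).intervalIntegrable a b)]
  field_simp
  ring

lemma frullani_integrable {a b : ℝ} (ha : 0 < a) (hab : a ≤ b) :
    IntegrableOn (fun z => (Real.exp (-(a * z)) - Real.exp (-(b * z))) / z)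
      (Set.Ioi (0:ℝ)) := by
  refine Integrable.mono' ((exp_neg_integrableOn_Ioi 0 ha).const_mul (b - a)) ?_ ?_
  · exact (((Real.measurable_exp.comp (measurable_const.mul measurable_id).neg).sub
      (Real.measurable_exp.comp (measurable_const.mul measurable_id).neg)).div
      measurable_id).aestronglyMeasurable
  · rw [ae_restrict_iff' measurableSet_Ioi]
    refine Filter.Eventually.of_forall fun z hz => ?_
    rw [Set.mem_Ioi] at hz
    have h0 : Real.exp (-(b * z)) ≤ Real.exp (-(a * z)) := by
      apply Real.exp_le_exp.2; nlinarith
    rw [Real.norm_eq_abs, abs_div, abs_of_nonneg (sub_nonneg.2 h0), abs_of_pos hz,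
      div_le_iff₀ hz]
    have e1 : Real.exp (-(b * z)) = Real.exp (-(a * z)) * Real.exp (-((b - a) * z)) := by
      rw [← Real.exp_add]; ring_nf
    have e2 : -((b - a) * z) + 1 ≤ Real.exp (-((b - a) * z)) := Real.add_one_le_exp _
    have e3 : (0:ℝ) < Real.exp (-(a * z)) := Real.exp_pos _
    rw [neg_mul, e1]
    nlinarith [mul_le_mul_of_nonneg_left e2 e3.le]

/-- **Frullani's integral** for exponentials. -/
lemma frullani {a b : ℝ} (ha : 0 < a) (hab : a ≤ b) :
    ∫ z in Set.Ioi (0:ℝ), (Real.exp (-(a * z)) - Real.exp (-(b * z))) / z =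
      Real.log b - Real.log a := by
  have hb : 0 < b := ha.trans_le hab
  have hmeas : AEStronglyMeasurable (Function.uncurry fun z s : ℝ => Real.exp (-(z * s)))
      ((volume.restrict (Set.Ioi (0:ℝ))).prod (volume.restrict (Set.Ioc a b))) := by
    apply Continuous.aestronglyMeasurable
    exact Real.continuous_exp.comp (continuous_fst.mul continuous_snd).neg
  have hInt : Integrable (Function.uncurry fun z s : ℝ => Real.exp (-(z * s)))
      ((volume.restrict (Set.Ioi (0:ℝ))).prod (volume.restrict (Set.Ioc a b))) := by
    rw [integrable_prod_iff hmeas]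
    constructor
    · refine Filter.Eventually.of_forall fun z => ?_
      exact (Real.continuous_exp.comp (continuous_const.mul continuous_id).neg).integrableOn_Ioc
    · refine (frullani_integrable ha hab).congr ?_
      filter_upwards [ae_restrict_mem measurableSet_Ioi] with z hz
      rw [Set.mem_Ioi] at hz
      have hn : ∀ s, ‖Real.exp (-(z * s))‖ = Real.exp (-(z * s)) := fun s =>
        Real.norm_eq_abs _ ▸ abs_of_pos (Real.exp_pos _)
      simp only [Function.uncurry_apply_pair, hn]
      rw [integral_exp_Ioc' hz hab]
      ring_nf
  calc ∫ z in Set.Ioi (0:ℝ), (Real.exp (-(a * z)) - Real.exp (-(b * z))) / z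
      = ∫ z in Set.Ioi (0:ℝ), ∫ s in Set.Ioc a b, Real.exp (-(z * s)) := by
        refine setIntegral_congr_fun measurableSet_Ioi fun z hz => ?_
        rw [Set.mem_Ioi] at hz
        rw [integral_exp_Ioc' hz hab]
        ring_nf
    _ = ∫ s in Set.Ioc a b, ∫ z in Set.Ioi (0:ℝ), Real.exp (-(z * s)) :=
        integral_integral_swap hInt
    _ = ∫ s in Set.Ioc a b, 1 / s := by
        refine setIntegral_congr_fun measurableSet_Ioc fun s hs => ?_
        have hs0 : 0 < s := ha.trans_le hs.1.le
        rw [← integral_exp_neg_mul_Ioi' hs0]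
        refine setIntegral_congr_fun measurableSet_Ioi fun z _ => by ring_nf
    _ = Real.log b - Real.log a := by
        rw [← intervalIntegral.integral_of_le hab, integral_one_div_of_pos ha hb,
          Real.log_div hb.ne' ha.ne']

/-- Pointwise Frullani identity specialised to the spectral-efficiency integrand. -/
lemma pointwise_frullani {i s N₀ : ℝ} (hi : 0 ≤ i) (hs : 0 ≤ s) (hN : 0 < N₀) :
    IntegrableOn
        (fun z => Real.exp (-(z / N₀) * i) * (1 - Real.exp (-(z / N₀) * s)) *
          Real.exp (-z) / z) (Set.Ioi (0:ℝ)) ∧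
      ∫ z in Set.Ioi (0:ℝ), Real.exp (-(z / N₀) * i) * (1 - Real.exp (-(z / N₀) * s)) *
          Real.exp (-z) / z = Real.log (1 + s / (i + N₀)) := by
  set c := (i + N₀) / N₀ with hc_def
  set d := (i + N₀ + s) / N₀ with hd_def
  have hc : 0 < c := div_pos (by linarith) hN
  have hd : 0 < d := div_pos (by linarith) hN
  have hcd : c ≤ d := by
    rw [hc_def, hd_def, div_le_div_iff₀ hN hN]
    nlinarith
  have hpt : Set.EqOn (fun z => (Real.exp (-(c * z)) - Real.exp (-(d * z))) / z)
      (fun z => Real.exp (-(z / N₀) * i) * (1 - Real.exp (-(z / N₀) * s)) *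
        Real.exp (-z) / z) (Set.Ioi (0:ℝ)) := by
    intro z hz
    have e1 : Real.exp (-(c * z)) = Real.exp (-(z / N₀) * i) * Real.exp (-z) := by
      rw [← Real.exp_add]; congr 1; rw [hc_def]; field_simp; ring
    have e2 : Real.exp (-(d * z)) =
        Real.exp (-(z / N₀) * i) * Real.exp (-(z / N₀) * s) * Real.exp (-z) := by
      rw [← Real.exp_add, ← Real.exp_add]; congr 1; rw [hd_def]; field_simp; ring
    simp only
    rw [e1, e2]; ring
  have hiN : i + N₀ ≠ 0 := by positivity
  refine ⟨(frullani_integrable hc hcd).congr_fun hpt measurableSet_Ioi, ?_⟩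
  rw [← setIntegral_congr_fun measurableSet_Ioi hpt, frullani hc hcd,
    ← Real.log_div hd.ne' hc.ne']
  congr 1
  rw [hc_def, hd_def]
  field_simp

/-- Conditional spectral efficiency via Hamdi's lemma: for independent nonnegative
random variables `S` (signal power) and `I` (interference power) and noise power
`N₀ > 0`, `E[ln(1 + S/(I + N₀))] = ∫₀^∞ L_I(z/N₀) (1 − L_S(z/N₀)) e^{−z}/z dz`. -/
theorem spectral_efficiency_laplace {Ω : Type*} [MeasureSpace Ω]
    {μ : Measure Ω} [IsProbabilityMeasure μ]
    (S I : Ω → ℝ) (hS : Measurable S) (hI : Measurable I)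
    (hSpos : ∀ ω, 0 ≤ S ω) (hIpos : ∀ ω, 0 ≤ I ω)
    (hindep : IndepFun S I μ)
    (N₀ : ℝ) (hN₀ : 0 < N₀)
    (hint : Integrable (fun ω => Real.log (1 + S ω / (I ω + N₀))) μ) :
    (∫ ω, Real.log (1 + S ω / (I ω + N₀)) ∂μ)
      = ∫ z in Set.Ioi (0:ℝ),
          (∫ ω, Real.exp (-(z / N₀) * I ω) ∂μ) *
            (1 - ∫ ω, Real.exp (-(z / N₀) * S ω) ∂μ) * Real.exp (-z) / z := by
  have hpt := fun ω => pointwise_frullani (hIpos ω) (hSpos ω) hN₀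
  have hmeasF : Measurable (Function.uncurry fun (ω : Ω) (z : ℝ) =>
      Real.exp (-(z / N₀) * I ω) * (1 - Real.exp (-(z / N₀) * S ω)) *
        Real.exp (-z) / z) := by
    have m1 : Measurable fun p : Ω × ℝ => Real.exp (-(p.2 / N₀) * I p.1) :=
      (((measurable_snd.div_const N₀).neg.mul (hI.comp measurable_fst))).exp
    have m2 : Measurable fun p : Ω × ℝ => Real.exp (-(p.2 / N₀) * S p.1) :=
      (((measurable_snd.div_const N₀).neg.mul (hS.comp measurable_fst))).exp
    exact ((m1.mul (measurable_const.sub m2)).mul measurable_snd.neg.exp).div measurable_snd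
  have hnonneg : ∀ ω, ∀ z ∈ Set.Ioi (0:ℝ),
      0 ≤ Real.exp (-(z / N₀) * I ω) * (1 - Real.exp (-(z / N₀) * S ω)) *
        Real.exp (-z) / z := by
    intro ω z hz
    have hz' : (0:ℝ) < z := hz
    have hb : Real.exp (-(z / N₀) * S ω) ≤ 1 := by
      apply Real.exp_le_one_iff.mpr
      have : 0 ≤ z / N₀ * S ω := mul_nonneg (div_nonneg hz'.le hN₀.le) (hSpos ω)
      nlinarith
    exact div_nonneg (mul_nonneg (mul_nonneg (Real.exp_pos _).le
      (sub_nonneg.2 hb)) (Real.exp_pos _).le) hz'.le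
  have hprod : Integrable (Function.uncurry fun (ω : Ω) (z : ℝ) =>
      Real.exp (-(z / N₀) * I ω) * (1 - Real.exp (-(z / N₀) * S ω)) *
        Real.exp (-z) / z) (μ.prod (volume.restrict (Set.Ioi 0))) := by
    rw [integrable_prod_iff hmeasF.aestronglyMeasurable]
    constructor
    · exact Filter.Eventually.of_forall fun ω => (hpt ω).1
    · refine hint.congr (Filter.Eventually.of_forall fun ω => ?_)
      beta_reduce
      rw [← (hpt ω).2]
      exact setIntegral_congr_fun measurableSet_Ioi fun z hz =>
        (Real.norm_of_nonneg (hnonneg ω z hz)).symm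
  calc (∫ ω, Real.log (1 + S ω / (I ω + N₀)) ∂μ)
      = ∫ ω, (∫ z in Set.Ioi (0:ℝ),
          Real.exp (-(z / N₀) * I ω) * (1 - Real.exp (-(z / N₀) * S ω)) *
            Real.exp (-z) / z) ∂μ :=
        integral_congr_ae (Filter.Eventually.of_forall fun ω => ((hpt ω).2).symm)
    _ = ∫ z in Set.Ioi (0:ℝ), ∫ ω,
          Real.exp (-(z / N₀) * I ω) * (1 - Real.exp (-(z / N₀) * S ω)) *
            Real.exp (-z) / z ∂μ := integral_integral_swap hprod
    _ = ∫ z in Set.Ioi (0:ℝ),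
          (∫ ω, Real.exp (-(z / N₀) * I ω) ∂μ) *
            (1 - ∫ ω, Real.exp (-(z / N₀) * S ω) ∂μ) * Real.exp (-z) / z := by
        refine setIntegral_congr_fun measurableSet_Ioi fun z hz => ?_
        have hz' : (0:ℝ) < z := hz
        have hcoef : 0 ≤ z / N₀ := div_nonneg hz'.le hN₀.le
        have hboundI : ∀ ω, ‖Real.exp (-(z / N₀) * I ω)‖ ≤ 1 := fun ω => by
          rw [Real.norm_eq_abs, abs_of_pos (Real.exp_pos _)]
          exact Real.exp_le_one_iff.mpr (by nlinarith [mul_nonneg hcoef (hIpos ω)])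
        have hboundS : ∀ ω, ‖Real.exp (-(z / N₀) * S ω)‖ ≤ 1 := fun ω => by
          rw [Real.norm_eq_abs, abs_of_pos (Real.exp_pos _)]
          exact Real.exp_le_one_iff.mpr (by nlinarith [mul_nonneg hcoef (hSpos ω)])
        have hIa : Integrable (fun ω => Real.exp (-(z / N₀) * I ω)) μ :=
          Integrable.mono' (integrable_const 1)
            ((hI.const_mul _).exp).aestronglyMeasurable
            (Filter.Eventually.of_forall hboundI)
        have hSa : Integrable (fun ω => Real.exp (-(z / N₀) * S ω)) μ :=
          Integrable.mono' (integrable_const 1)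
            ((hS.const_mul _).exp).aestronglyMeasurable
            (Filter.Eventually.of_forall hboundS)
        have hISa : Integrable (fun ω =>
            Real.exp (-(z / N₀) * I ω) * Real.exp (-(z / N₀) * S ω)) μ := by
          refine Integrable.mono' (integrable_const 1)
            (((hI.const_mul _).exp.mul (hS.const_mul _).exp)).aestronglyMeasurable
            (Filter.Eventually.of_forall fun ω => ?_)
          rw [norm_mul]
          calc ‖Real.exp (-(z / N₀) * I ω)‖ * ‖Real.exp (-(z / N₀) * S ω)‖
              ≤ 1 * 1 := by
                apply mul_le_mul (hboundI ω) (hboundS ω) (norm_nonneg _) zero_le_one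
            _ = 1 := one_mul 1
        have hindep' : ∫ ω, Real.exp (-(z / N₀) * I ω) * Real.exp (-(z / N₀) * S ω) ∂μ
            = (∫ ω, Real.exp (-(z / N₀) * I ω) ∂μ) *
              (∫ ω, Real.exp (-(z / N₀) * S ω) ∂μ) := by
          have h := (hindep.symm.comp (φ := fun x : ℝ => Real.exp (-(z / N₀) * x))
            (ψ := fun x : ℝ => Real.exp (-(z / N₀) * x))
            (Real.measurable_exp.comp (measurable_id.const_mul _))
            (Real.measurable_exp.comp (measurable_id.const_mul _))).integral_mul_eq_mul_integral
            hIa.aestronglyMeasurable hSa.aestronglyMeasurable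
          exact h
        calc ∫ ω, Real.exp (-(z / N₀) * I ω) * (1 - Real.exp (-(z / N₀) * S ω)) *
                Real.exp (-z) / z ∂μ
            = ∫ ω, (Real.exp (-(z / N₀) * I ω) -
                Real.exp (-(z / N₀) * I ω) * Real.exp (-(z / N₀) * S ω)) *
                  (Real.exp (-z) / z) ∂μ :=
              integral_congr_ae (Filter.Eventually.of_forall fun ω => by ring)
          _ = ((∫ ω, Real.exp (-(z / N₀) * I ω) ∂μ) -
                (∫ ω, Real.exp (-(z / N₀) * I ω) ∂μ) *
                  (∫ ω, Real.exp (-(z / N₀) * S ω) ∂μ)) * (Real.exp (-z) / z) := by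
              rw [integral_mul_const, integral_sub hIa hISa, hindep']
          _ = (∫ ω, Real.exp (-(z / N₀) * I ω) ∂μ) *
                (1 - ∫ ω, Real.exp (-(z / N₀) * S ω) ∂μ) * Real.exp (-z) / z := by
              ring
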